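/- arXiv:2311.14023 — 2 statements merged into one kernel-verified Lean document; each statement's English description precedes it below -/
import Mathlib

section
/- Let B and C be n×n real SPSD matrices with B ⪰ C ⪰ 0. Then for every p ∈ [1,∞), ‖B − C‖_(p) ≤ (‖B‖_(p)^p − ‖C‖_(p)^p)^{1/p}, i.e. tr((B − C)^p) + tr(C^p) ≤ tr(B^p). Moreover, when p = 1 the inequality is an equality: ‖B − C‖_* = ‖B‖_* − ‖C‖_*. -/
open Matrix BigOperators

/-- `M = U * diagonal μ * Uᵀ` is a spectral (eigen)decomposition of the symmetric matrix `M`,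
with orthogonal `U` and eigenvalues `μ` listed in nonincreasing order. -/
def IsSpectralDecomp {n : ℕ} (M U : Matrix (Fin n) (Fin n) ℝ) (μ : Fin n → ℝ) : Prop :=
  Uᵀ * U = 1 ∧ Antitone μ ∧ M = U * Matrix.diagonal μ * Uᵀ

/-- Truncation of a spectral decomposition to its `k` largest (first `k`) eigenvalues:
the best rank-`k` approximation `M_(k)` associated with the decomposition `(U, μ)`. -/
noncomputable def trunc {n : ℕ} (k : ℕ) (U : Matrix (Fin n) (Fin n) ℝ) (μ : Fin n → ℝ) :
    Matrix (Fin n) (Fin n) ℝ :=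
  U * Matrix.diagonal (fun i : Fin n => if (i : ℕ) < k then μ i else 0) * Uᵀ

/-- `f` is operator monotone on SPSD matrices: for all `m` and all `m × m` SPSD matrices
`B ⪰ C ⪰ 0`, one has `f(B) ⪰ f(C)`, where matrix functions are computed through (any)
spectral decomposition. -/
def OperatorMonotone (f : ℝ → ℝ) : Prop :=
  ∀ (m : ℕ) (B C U V : Matrix (Fin m) (Fin m) ℝ) (β γ : Fin m → ℝ),
    IsSpectralDecomp B U β → IsSpectralDecomp C V γ →
    B.PosSemidef → C.PosSemidef → (B - C).PosSemidef →
    (U * Matrix.diagonal (f ∘ β) * Uᵀ - V * Matrix.diagonal (f ∘ γ) * Vᵀ).PosSemidef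

/-- Squared Frobenius norm `‖M‖_F² = Σ_{i,j} M_{ij}²`. -/
noncomputable def frobSq {m l : ℕ} (M : Matrix (Fin m) (Fin l) ℝ) : ℝ :=
  ∑ i, ∑ j, (M i j) ^ 2

/-- Frobenius norm. -/
noncomputable def frobNorm {m l : ℕ} (M : Matrix (Fin m) (Fin l) ℝ) : ℝ :=
  Real.sqrt (frobSq M)

/-- The eigenvalues of a Hermitian matrix listed in nonincreasing order:
`eigsDesc hM i` is the `(i+1)`-st largest eigenvalue of `M`. -/
noncomputable def eigsDesc {m : ℕ} {M : Matrix (Fin m) (Fin m) ℝ} (hM : M.IsHermitian) :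
    Fin m → ℝ :=
  fun i => (hM.eigenvalues ∘ Tuple.sort hM.eigenvalues) i.rev

/-- The singular values of `M` in nonincreasing order: `svDesc M i` is the `(i+1)`-st largest
singular value of `M`, i.e. the square root of the `(i+1)`-st largest eigenvalue of `MᴴM`. -/
noncomputable def svDesc {m l : ℕ} (M : Matrix (Fin m) (Fin l) ℝ) : Fin l → ℝ :=
  fun i => Real.sqrt (eigsDesc (show (Mᵀ * M).IsHermitian by
    simpa using Matrix.isHermitian_conjTranspose_mul_self M) i)

/-- Nuclear norm: the sum of the singular values. -/
noncomputable def nuclearNorm {m l : ℕ} (M : Matrix (Fin m) (Fin l) ℝ) : ℝ :=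
  ∑ i, svDesc M i

/-- Operator (spectral) norm: the largest singular value. -/
noncomputable def opNorm {m l : ℕ} (M : Matrix (Fin m) (Fin l) ℝ) : ℝ :=
  ⨆ i, svDesc M i

/-- `p`-th power of the Schatten `p`-norm: `‖M‖_(p)^p = Σᵢ σᵢ(M)^p`. -/
noncomputable def schattenPow {m l : ℕ} (p : ℝ) (M : Matrix (Fin m) (Fin l) ℝ) : ℝ :=
  ∑ i, svDesc M i ^ p

/-- Schatten `p`-norm: `‖M‖_(p) = (Σᵢ σᵢ(M)^p)^(1/p)`. -/
noncomputable def schattenNorm {m l : ℕ} (p : ℝ) (M : Matrix (Fin m) (Fin l) ℝ) : ℝ :=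
  (schattenPow p M) ^ (1 / p)

/-- `P` is the orthogonal projection onto the column space of `M`. -/
def IsOrthProjOnto {m l : ℕ} (P : Matrix (Fin m) (Fin m) ℝ) (M : Matrix (Fin m) (Fin l) ℝ) :
    Prop :=
  Pᵀ = P ∧ P * P = P ∧ P * M = M ∧ ∃ Y : Matrix (Fin l) (Fin m) ℝ, P = M * Y

section AuxLemmas
open Finset

/-- Weighted power-mean vs harmonic-mean inequality. -/
lemma aux_powermean {n : ℕ} (d β : Fin n → ℝ) (hd : ∀ i, 0 ≤ d i) (hβ : ∀ i, 0 ≤ β i)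
    (hsum : ∑ i, d i = 1) {α : ℝ} (hα : 0 < α)
    (hz : ∀ i, β i = 0 → d i = 0)
    (hS : α * (∑ i, d i * (if β i = 0 then 0 else (β i)⁻¹)) ≤ 1)
    {s : ℝ} (hs : 0 ≤ s) :
    α ^ s ≤ ∑ i, d i * β i ^ s := by
  rcases hs.eq_or_lt with h0 | hs'
  · simp [← h0, hsum]
  set binv : Fin n → ℝ := fun i => if β i = 0 then 0 else (β i)⁻¹ with hbinv
  have hbinv_nonneg : ∀ i, 0 ≤ binv i := by
    intro i; rw [hbinv]; dsimp only
    split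
    · exact le_refl 0
    · exact inv_nonneg.2 (hβ i)
  have hop : (0:ℝ) < 1 + s := by linarith
  have hop' : (1:ℝ) + s ≠ 0 := ne_of_gt hop
  have hs0 : s ≠ 0 := ne_of_gt hs'
  have ht_pos : 0 < s / (1 + s) := div_pos hs' hop
  have hu_pos : 0 < 1 / (1 + s) := by positivity
  have hconj : Real.HolderConjugate (1 + s) ((1 + s) / s) := by
    rw [Real.holderConjugate_iff_eq_conjExponent (by linarith), add_sub_cancel_left]
  set f : Fin n → ℝ := fun i => d i ^ ((1:ℝ)/(1+s)) * β i ^ (s/(1+s)) with hf_def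
  set g : Fin n → ℝ := fun i => d i ^ (s/(1+s)) * binv i ^ (s/(1+s)) with hg_def
  have hf : ∀ i ∈ univ, 0 ≤ f i := fun i _ =>
    mul_nonneg (Real.rpow_nonneg (hd i) _) (Real.rpow_nonneg (hβ i) _)
  have hg : ∀ i ∈ univ, 0 ≤ g i := fun i _ =>
    mul_nonneg (Real.rpow_nonneg (hd i) _) (Real.rpow_nonneg (hbinv_nonneg i) _)
  have key1 : ∀ i, f i * g i = d i := by
    intro i
    by_cases hb : β i = 0
    · have := hz i hb
      rw [hf_def]; dsimp only
      rw [this, Real.zero_rpow (ne_of_gt hu_pos), zero_mul, zero_mul]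
    · rw [hf_def, hg_def]; dsimp only
      have e1 : d i ^ ((1:ℝ)/(1+s)) * β i ^ (s/(1+s)) * (d i ^ (s/(1+s)) * binv i ^ (s/(1+s)))
          = (d i ^ ((1:ℝ)/(1+s)) * d i ^ (s/(1+s))) * (β i ^ (s/(1+s)) * binv i ^ (s/(1+s))) := by
        ring
      rw [e1, ← Real.rpow_add' (hd i) (by rw [← add_div, div_self hop']; exact one_ne_zero),
        ← Real.mul_rpow (hβ i) (hbinv_nonneg i)]
      have : β i * binv i = 1 := by rw [hbinv]; dsimp only; rw [if_neg hb]; field_simp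
      rw [this, Real.one_rpow, mul_one]
      have : (1:ℝ)/(1+s) + s/(1+s) = 1 := by field_simp
      rw [this, Real.rpow_one]
  have key2 : ∀ i, f i ^ (1+s) = d i * β i ^ s := by
    intro i
    rw [hf_def]; dsimp only
    rw [Real.mul_rpow (Real.rpow_nonneg (hd i) _) (Real.rpow_nonneg (hβ i) _),
      ← Real.rpow_mul (hd i), ← Real.rpow_mul (hβ i), one_div_mul_cancel hop',
      div_mul_cancel₀ _ hop', Real.rpow_one]
  have key3 : ∀ i, g i ^ ((1+s)/s) = d i * binv i := by
    intro i
    rw [hg_def]; dsimp only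
    rw [Real.mul_rpow (Real.rpow_nonneg (hd i) _) (Real.rpow_nonneg (hbinv_nonneg i) _),
      ← Real.rpow_mul (hd i), ← Real.rpow_mul (hbinv_nonneg i)]
    have : s/(1+s) * ((1+s)/s) = 1 := by field_simp
    rw [this, Real.rpow_one, Real.rpow_one]
  have H := Real.inner_le_Lp_mul_Lq_of_nonneg univ hconj hf hg
  simp only [key1, key2, key3] at H
  rw [hsum] at H
  set X := ∑ i, d i * β i ^ s with hX_def
  set T := ∑ i, d i * binv i with hT_def
  have hX : 0 ≤ X := sum_nonneg fun i _ => mul_nonneg (hd i) (Real.rpow_nonneg (hβ i) _)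
  have hT : 0 ≤ T := sum_nonneg fun i _ => mul_nonneg (hd i) (hbinv_nonneg i)
  have hTα : T ≤ α⁻¹ := by
    rw [← one_div, le_div_iff₀ hα]
    linarith [hS]
  have hq : 1/((1+s)/s) = s/(1+s) := one_div_div _ _
  rw [hq] at H
  -- H : 1 ≤ X ^ (1/(1+s)) * T ^ (s/(1+s))
  have step1 : T ^ (s/(1+s)) ≤ (α⁻¹) ^ (s/(1+s)) :=
    Real.rpow_le_rpow hT hTα (le_of_lt ht_pos)
  have hXu : 0 ≤ X ^ ((1:ℝ)/(1+s)) := Real.rpow_nonneg hX _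
  have H2 : 1 ≤ X ^ ((1:ℝ)/(1+s)) * (α⁻¹) ^ (s/(1+s)) :=
    H.trans (mul_le_mul_of_nonneg_left step1 hXu)
  have hαt : 0 < α ^ (s/(1+s)) := Real.rpow_pos_of_pos hα _
  have H3 : α ^ (s/(1+s)) ≤ X ^ ((1:ℝ)/(1+s)) := by
    have := mul_le_mul_of_nonneg_left H2 (le_of_lt hαt)
    rw [mul_one] at this
    calc α ^ (s/(1+s)) ≤ α ^ (s/(1+s)) * (X ^ ((1:ℝ)/(1+s)) * α⁻¹ ^ (s/(1+s))) := this
      _ = X ^ ((1:ℝ)/(1+s)) * (α ^ (s/(1+s)) * α⁻¹ ^ (s/(1+s))) := by ring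
      _ = X ^ ((1:ℝ)/(1+s)) := by
          rw [← Real.mul_rpow (le_of_lt hα) (inv_nonneg.2 (le_of_lt hα)),
            mul_inv_cancel₀ (ne_of_gt hα), Real.one_rpow, mul_one]
  have H4 := Real.rpow_le_rpow (le_of_lt hαt) H3 (le_of_lt hop)
  rw [← Real.rpow_mul (le_of_lt hα)] at H4
  rw [← Real.rpow_mul hX] at H4
  rw [div_mul_cancel₀ _ hop', one_div_mul_cancel hop', Real.rpow_one] at H4
  exact H4

/-- Conjugating a quadratic form. -/
lemma aux_conj_quadform {n : ℕ} (U M : Matrix (Fin n) (Fin n) ℝ) (z : Fin n → ℝ) :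
    (U *ᵥ z) ⬝ᵥ (M *ᵥ (U *ᵥ z)) = z ⬝ᵥ ((star U * M * U) *ᵥ z) := by
  have hstar : star U = Uᵀ := U.conjTranspose_eq_transpose_of_trivial
  rw [hstar, mul_assoc, ← Matrix.mulVec_mulVec, Matrix.dotProduct_mulVec z Uᵀ,
    Matrix.vecMul_transpose, ← Matrix.mulVec_mulVec]

/-- Diagonal entry of `W * diagonal v * Wᴴ`. -/
lemma aux_conj_diag_apply {n : ℕ} (W : Matrix (Fin n) (Fin n) ℝ) (v : Fin n → ℝ) (i : Fin n) :
    (W * diagonal v * star W) i i = ∑ j, v j * (W i j)^2 := by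
  rw [Matrix.mul_apply]
  refine Finset.sum_congr rfl fun j _ => ?_
  rw [Matrix.mul_diagonal, Matrix.star_apply, star_trivial]
  ring

/-- quadratic form of a diagonal matrix -/
lemma aux_diag_quadform {n : ℕ} (v : Fin n → ℝ) (z : Fin n → ℝ) :
    z ⬝ᵥ (diagonal v *ᵥ z) = ∑ i, v i * (z i)^2 := by
  simp only [dotProduct, Matrix.mulVec_diagonal]
  refine Finset.sum_congr rfl fun i _ => by ring

lemma aux_mulVec_entry {n : ℕ} (W : Matrix (Fin n) (Fin n) ℝ) (z : Fin n → ℝ) (j : Fin n) :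
    ((star W) *ᵥ z) j = ∑ i, W i j * z i := by
  simp only [Matrix.mulVec, dotProduct, Matrix.star_apply, star_trivial]

/-- column normalization -/
lemma aux_col_norm {n : ℕ} (W : Matrix (Fin n) (Fin n) ℝ) (hW : star W * W = 1) (j : Fin n) :
    ∑ i, (W i j)^2 = 1 := by
  have h := congrArg (fun M => M j j) hW
  simp only [Matrix.mul_apply, Matrix.one_apply_eq, Matrix.star_apply, star_trivial] at h
  rw [← h]
  refine Finset.sum_congr rfl fun i _ => by ring

lemma aux_key_step {n : ℕ} (B A : Matrix (Fin n) (Fin n) ℝ)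
    (hB : B.PosSemidef) (hA : A.PosSemidef) (hBA : (B - A).PosSemidef)
    {s : ℝ} (hs : 0 ≤ s) :
    ∑ j, hA.1.eigenvalues j ^ (s+1) ≤
      ∑ i, hB.1.eigenvalues i ^ s *
        ((star (hB.1.eigenvectorUnitary : Matrix (Fin n) (Fin n) ℝ) * A *
          (hB.1.eigenvectorUnitary : Matrix (Fin n) (Fin n) ℝ)) i i) := by
  classical
  set β := hB.1.eigenvalues with hβ_def
  set α := hA.1.eigenvalues with hα_def
  set U : Matrix (Fin n) (Fin n) ℝ := (hB.1.eigenvectorUnitary : Matrix (Fin n) (Fin n) ℝ)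
    with hU_def
  set V : Matrix (Fin n) (Fin n) ℝ := (hA.1.eigenvectorUnitary : Matrix (Fin n) (Fin n) ℝ)
    with hV_def
  have hUU : U * star U = 1 := Matrix.mem_unitaryGroup_iff.mp hB.1.eigenvectorUnitary.2
  have hVV' : star V * V = 1 := Matrix.mem_unitaryGroup_iff'.mp hA.1.eigenvectorUnitary.2
  have hspecB : B = U * diagonal β * star U := by
    have h := hB.1.spectral_theorem
    rwa [RCLike.ofReal_real_eq_id, Function.id_comp] at h
  have hspecA : A = V * diagonal α * star V := by
    have h := hA.1.spectral_theorem
    rwa [RCLike.ofReal_real_eq_id, Function.id_comp] at h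
  have hdiagB : star U * B * U = diagonal β := by
    have h := hB.1.conjStarAlgAut_star_eigenvectorUnitary
    rw [Unitary.conjStarAlgAut_star_apply] at h
    rwa [RCLike.ofReal_real_eq_id, Function.id_comp] at h
  set W : Matrix (Fin n) (Fin n) ℝ := star U * V with hW_def
  have hWW : star W * W = 1 := by
    rw [hW_def, StarMul.star_mul, star_star, mul_assoc, ← mul_assoc U (star U) V, hUU, one_mul, hVV']
  have hconjA : star U * A * U = W * diagonal α * star W := by
    rw [hspecA, hW_def, StarMul.star_mul, star_star]
    simp only [mul_assoc]
  have entry : ∀ i, (star U * A * U) i i = ∑ j, α j * (W i j)^2 := fun i => by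
    rw [hconjA]; exact aux_conj_diag_apply W α i
  have hβ_nonneg : ∀ i, 0 ≤ β i := fun i => hB.eigenvalues_nonneg i
  have hα_nonneg : ∀ j, 0 ≤ α j := fun j => hA.eigenvalues_nonneg j
  have Htest : ∀ (j : Fin n) (z : Fin n → ℝ),
      α j * (∑ i, W i j * z i)^2 ≤ ∑ i, β i * (z i)^2 := by
    intro j z
    set x := U *ᵥ z with hx_def
    have e1 : ∑ i, β i * (z i)^2 = x ⬝ᵥ (B *ᵥ x) := by
      rw [← aux_diag_quadform, ← hdiagB, ← aux_conj_quadform]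
    have e2 : x ⬝ᵥ (A *ᵥ x) = ∑ k, α k * (((star V) *ᵥ x) k)^2 := by
      have h := aux_conj_quadform (star V) (diagonal α) x
      rw [star_star, ← hspecA] at h
      rw [← h, aux_diag_quadform]
    have e3 : x ⬝ᵥ (A *ᵥ x) ≤ x ⬝ᵥ (B *ᵥ x) := by
      have h0 := hBA.dotProduct_mulVec_nonneg x
      have hsx : star x = x := funext fun i => star_trivial _
      rw [hsx, Matrix.sub_mulVec, dotProduct_sub] at h0
      linarith
    have e4 : (star V) *ᵥ x = (star W) *ᵥ z := by
      rw [hW_def, StarMul.star_mul, star_star, hx_def, Matrix.mulVec_mulVec]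
    have e5 : ((star W) *ᵥ z) j = ∑ i, W i j * z i := aux_mulVec_entry W z j
    have e6 : α j * (∑ i, W i j * z i)^2 ≤ ∑ k, α k * (((star V) *ᵥ x) k)^2 := by
      rw [← e5, ← e4]
      exact Finset.single_le_sum
        (f := fun k => α k * (((star V) *ᵥ x) k)^2)
        (fun k _ => mul_nonneg (hα_nonneg k) (sq_nonneg _)) (mem_univ j)
    calc α j * (∑ i, W i j * z i)^2 ≤ x ⬝ᵥ (A *ᵥ x) := by rw [e2]; exact e6
      _ ≤ x ⬝ᵥ (B *ᵥ x) := e3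
      _ = ∑ i, β i * (z i)^2 := e1.symm
  have main_j : ∀ j, α j ^ (s+1) ≤ α j * ∑ i, (W i j)^2 * β i ^ s := by
    intro j
    rcases (hα_nonneg j).eq_or_lt with hj0 | hjpos
    · rw [← hj0, Real.zero_rpow (by positivity : s + 1 ≠ 0), zero_mul]
    · have hd : ∀ i : Fin n, 0 ≤ (W i j)^2 := fun i => sq_nonneg _
      have hsum1 : ∑ i, (W i j)^2 = 1 := aux_col_norm W hWW j
      have hz : ∀ i, β i = 0 → (W i j)^2 = 0 := by
        intro i hbi
        have h := Htest j (Pi.single i 1)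
        have hL : ∑ i', W i' j * (Pi.single i 1 : Fin n → ℝ) i' = W i j := by
          simp [Pi.single_apply, mul_ite]
        have hR : ∑ i', β i' * ((Pi.single i 1 : Fin n → ℝ) i')^2 = β i := by
          simp [Pi.single_apply, mul_ite]
        rw [hL, hR, hbi] at h
        nlinarith [sq_nonneg (W i j), hjpos]
      have hS : α j * (∑ i, (W i j)^2 * (if β i = 0 then 0 else (β i)⁻¹)) ≤ 1 := by
        set binv : Fin n → ℝ := fun i => if β i = 0 then 0 else (β i)⁻¹ with hbinv_def
        have hbinv_nonneg : ∀ i, 0 ≤ binv i := by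
          intro i; rw [hbinv_def]; dsimp only; split
          · exact le_refl 0
          · exact inv_nonneg.2 (hβ_nonneg i)
        set S := ∑ i, (W i j)^2 * binv i with hS_def
        have h := Htest j (fun i => W i j * binv i)
        have hL : ∑ i, W i j * (W i j * binv i) = S := by
          rw [hS_def]; exact Finset.sum_congr rfl fun i _ => by ring
        have hR : ∑ i, β i * (W i j * binv i)^2 = S := by
          rw [hS_def]
          refine Finset.sum_congr rfl fun i _ => ?_
          rw [hbinv_def]; dsimp only
          by_cases hbi : β i = 0
          · rw [if_pos hbi, hbi]; ring
          · rw [if_neg hbi]; field_simp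
        rw [hL, hR] at h
        have hSnn : 0 ≤ S := Finset.sum_nonneg fun i _ =>
          mul_nonneg (sq_nonneg _) (hbinv_nonneg i)
        rcases hSnn.eq_or_lt with hS0 | hSpos
        · rw [← hS0, mul_zero]; norm_num
        · nlinarith [h, hSpos]
      have hpm := aux_powermean (fun i => (W i j)^2) β hd hβ_nonneg hsum1 hjpos hz hS hs
      have hrw : α j ^ (s+1) = α j * α j ^ s := by
        rw [Real.rpow_add hjpos, Real.rpow_one]; ring
      rw [hrw]
      exact mul_le_mul_of_nonneg_left hpm (le_of_lt hjpos)
  calc ∑ j, α j ^ (s+1) ≤ ∑ j, α j * ∑ i, (W i j)^2 * β i ^ s :=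
        Finset.sum_le_sum fun j _ => main_j j
    _ = ∑ i, β i ^ s * ((star U * A * U) i i) := by
        simp only [entry, Finset.mul_sum]
        rw [Finset.sum_comm]
        exact Finset.sum_congr rfl fun i _ => Finset.sum_congr rfl fun j _ => by ring

end AuxLemmas

section AuxCharpoly
open Finset Polynomial

lemma aux_charpoly_conj {n : ℕ} (U D : Matrix (Fin n) (Fin n) ℝ) (hU : U * star U = 1) :
    (U * D * star U).charpoly = D.charpoly := by
  have h1 : ((C : ℝ →+* ℝ[X]).mapMatrix U) * ((C : ℝ →+* ℝ[X]).mapMatrix (star U))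
      = (1 : Matrix (Fin n) (Fin n) ℝ[X]) := by
    rw [← _root_.map_mul, hU, _root_.map_one]
  have hc : ∀ M : Matrix (Fin n) (Fin n) ℝ[X],
      Matrix.scalar (Fin n) (X : ℝ[X]) * M = M * Matrix.scalar (Fin n) (X : ℝ[X]) :=
    fun M => (Matrix.scalar_commute (X : ℝ[X]) (fun r' => Commute.all _ r') M).eq
  have h2 : charmatrix (U * D * star U) =
      ((C : ℝ →+* ℝ[X]).mapMatrix U) * charmatrix D * ((C : ℝ →+* ℝ[X]).mapMatrix (star U)) := by
    unfold Matrix.charmatrix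
    rw [_root_.map_mul, _root_.map_mul, Matrix.mul_sub, Matrix.sub_mul]
    congr 1
    rw [mul_assoc, hc, ← mul_assoc, h1, one_mul]
  unfold Matrix.charpoly
  rw [h2, Matrix.det_mul, Matrix.det_mul]
  have : ((C : ℝ →+* ℝ[X]).mapMatrix U).det * ((C : ℝ →+* ℝ[X]).mapMatrix (star U)).det = 1 := by
    rw [← Matrix.det_mul, h1, Matrix.det_one]
  calc ((C : ℝ →+* ℝ[X]).mapMatrix U).det * (charmatrix D).det *
        ((C : ℝ →+* ℝ[X]).mapMatrix (star U)).det
      = (charmatrix D).det * (((C : ℝ →+* ℝ[X]).mapMatrix U).det *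
          ((C : ℝ →+* ℝ[X]).mapMatrix (star U)).det) := by ring
    _ = (charmatrix D).det := by rw [this, mul_one]

lemma aux_charpoly_diagonal {n : ℕ} (v : Fin n → ℝ) :
    (diagonal v).charpoly = ∏ i, (X - C (v i)) := by
  unfold Matrix.charpoly Matrix.charmatrix
  rw [RingHom.mapMatrix_apply, Matrix.diagonal_map (map_zero _), Matrix.scalar_apply,
    Matrix.diagonal_sub, Matrix.det_diagonal]

lemma aux_eig_multiset {n : ℕ} {N : Matrix (Fin n) (Fin n) ℝ} (hN : N.IsHermitian)
    (U : Matrix (Fin n) (Fin n) ℝ) (v : Fin n → ℝ) (hU : U * star U = 1)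
    (hNd : N = U * diagonal v * star U) :
    Multiset.map hN.eigenvalues Finset.univ.val = Multiset.map v Finset.univ.val := by
  have hU2 : (hN.eigenvectorUnitary : Matrix (Fin n) (Fin n) ℝ)
      * star (hN.eigenvectorUnitary : Matrix (Fin n) (Fin n) ℝ) = 1 :=
    Matrix.mem_unitaryGroup_iff.mp hN.eigenvectorUnitary.2
  have hspec : N = (hN.eigenvectorUnitary : Matrix (Fin n) (Fin n) ℝ) * diagonal hN.eigenvalues
      * star (hN.eigenvectorUnitary : Matrix (Fin n) (Fin n) ℝ) := by
    have h := hN.spectral_theorem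
    rwa [RCLike.ofReal_real_eq_id, Function.id_comp] at h
  have h1 : N.charpoly = ∏ i, (X - C (hN.eigenvalues i)) := by
    conv_lhs => rw [hspec]
    rw [aux_charpoly_conj _ _ hU2, aux_charpoly_diagonal]
  have h2 : N.charpoly = ∏ i, (X - C (v i)) := by
    conv_lhs => rw [hNd]
    rw [aux_charpoly_conj _ _ hU, aux_charpoly_diagonal]
  have h3 : (Multiset.map (fun a => X - C a) (Multiset.map hN.eigenvalues Finset.univ.val)).prod
      = (Multiset.map (fun a => X - C a) (Multiset.map v Finset.univ.val)).prod := by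
    rw [Multiset.map_map, Multiset.map_map, ← Finset.prod_eq_multiset_prod,
      ← Finset.prod_eq_multiset_prod]
    exact h1.symm.trans h2
  have h4 := congrArg Polynomial.roots h3
  rwa [Polynomial.roots_multiset_prod_X_sub_C, Polynomial.roots_multiset_prod_X_sub_C] at h4

lemma aux_sum_fun_eig {n : ℕ} {N : Matrix (Fin n) (Fin n) ℝ} (hN : N.IsHermitian)
    (U : Matrix (Fin n) (Fin n) ℝ) (v : Fin n → ℝ) (hU : U * star U = 1)
    (hNd : N = U * diagonal v * star U) (g : ℝ → ℝ) :
    ∑ i, g (hN.eigenvalues i) = ∑ i, g (v i) := by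
  have hm := aux_eig_multiset hN U v hU hNd
  rw [Finset.sum_eq_multiset_sum, Finset.sum_eq_multiset_sum,
    show (fun i => g (hN.eigenvalues i)) = g ∘ hN.eigenvalues from rfl,
    show (fun i => g (v i)) = g ∘ v from rfl,
    ← Multiset.map_map, ← Multiset.map_map, hm]

lemma aux_trace_eq {n : ℕ} {M : Matrix (Fin n) (Fin n) ℝ} (hM : M.IsHermitian) :
    M.trace = ∑ i, hM.eigenvalues i := by
  have hspec : M = (hM.eigenvectorUnitary : Matrix (Fin n) (Fin n) ℝ) * diagonal hM.eigenvalues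
      * star (hM.eigenvectorUnitary : Matrix (Fin n) (Fin n) ℝ) := by
    have h := hM.spectral_theorem
    rwa [RCLike.ofReal_real_eq_id, Function.id_comp] at h
  conv_lhs => rw [hspec]
  rw [Matrix.trace_mul_cycle, Matrix.mem_unitaryGroup_iff'.mp hM.eigenvectorUnitary.2, one_mul,
    Matrix.trace_diagonal]

lemma aux_psd_sq_decomp {n : ℕ} (M : Matrix (Fin n) (Fin n) ℝ) (hM : M.PosSemidef) :
    Mᴴ * M = (hM.1.eigenvectorUnitary : Matrix (Fin n) (Fin n) ℝ)
      * diagonal (fun i => hM.1.eigenvalues i ^ 2)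
      * star (hM.1.eigenvectorUnitary : Matrix (Fin n) (Fin n) ℝ) := by
  set U : Matrix (Fin n) (Fin n) ℝ := (hM.1.eigenvectorUnitary : Matrix (Fin n) (Fin n) ℝ)
  have hspec : M = U * diagonal hM.1.eigenvalues * star U := by
    have h := hM.1.spectral_theorem
    rwa [RCLike.ofReal_real_eq_id, Function.id_comp] at h
  have hU' : star U * U = 1 := Matrix.mem_unitaryGroup_iff'.mp hM.1.eigenvectorUnitary.2
  have hherm : Mᴴ = M := hM.1
  calc Mᴴ * M = M * M := by rw [hherm]
    _ = (U * diagonal hM.1.eigenvalues) * ((star U * U) * (diagonal hM.1.eigenvalues * star U)) := by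
        conv_lhs => rw [hspec]
        simp only [mul_assoc]
    _ = U * (diagonal hM.1.eigenvalues * diagonal hM.1.eigenvalues) * star U := by
        rw [hU', one_mul]; simp only [mul_assoc]
    _ = U * diagonal (fun i => hM.1.eigenvalues i ^ 2) * star U := by
        rw [Matrix.diagonal_mul_diagonal]
        have : (fun i => hM.1.eigenvalues i * hM.1.eigenvalues i)
            = (fun i => hM.1.eigenvalues i ^ 2) := by
          funext i; exact (sq (hM.1.eigenvalues i)).symm
        rw [this]

end AuxCharpoly

section AuxBridge
open Finset


lemma aux_sum_svDesc {n : ℕ} (M : Matrix (Fin n) (Fin n) ℝ) (hM : M.PosSemidef) (g : ℝ → ℝ) :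
    ∑ i, g (svDesc M i) = ∑ i, g (hM.1.eigenvalues i) := by
  have hUmul : (hM.1.eigenvectorUnitary : Matrix (Fin n) (Fin n) ℝ)
      * star (hM.1.eigenvectorUnitary : Matrix (Fin n) (Fin n) ℝ) = 1 :=
    Matrix.mem_unitaryGroup_iff.mp hM.1.eigenvectorUnitary.2
  have hH : (Mᵀ * M).IsHermitian := by simpa using Matrix.isHermitian_conjTranspose_mul_self M
  have h1 : ∑ i, g (svDesc M i)
      = ∑ i, g (Real.sqrt (hH.eigenvalues i)) := by
    have h := Equiv.sum_comp
      (Fin.revPerm.trans (Tuple.sort hH.eigenvalues))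
      (fun j => g (Real.sqrt (hH.eigenvalues j)))
    rw [← h]
    rfl
  have h2 := aux_sum_fun_eig hH
    (hM.1.eigenvectorUnitary : Matrix (Fin n) (Fin n) ℝ)
    (fun i => hM.1.eigenvalues i ^ 2) hUmul
    (by rw [← aux_psd_sq_decomp M hM, conjTranspose_eq_transpose_of_trivial])
    (fun t => g (Real.sqrt t))
  rw [h1, h2]
  refine Finset.sum_congr rfl fun i _ => ?_
  rw [Real.sqrt_sq (hM.eigenvalues_nonneg i)]

lemma aux_schattenPow_psd {n : ℕ} (p : ℝ) (M : Matrix (Fin n) (Fin n) ℝ) (hM : M.PosSemidef) :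
    schattenPow p M = ∑ i, hM.1.eigenvalues i ^ p :=
  aux_sum_svDesc M hM (fun t => t ^ p)

lemma aux_nuclearNorm_psd {n : ℕ} (M : Matrix (Fin n) (Fin n) ℝ) (hM : M.PosSemidef) :
    nuclearNorm M = M.trace := by
  rw [aux_trace_eq hM.1]
  exact aux_sum_svDesc M hM (fun t => t)

end AuxBridge

/-- McCarthy-type inequality: for SPSD matrices `B ⪰ C ⪰ 0` and `p ∈ [1,∞)`,
`‖B − C‖_(p) ≤ (‖B‖_(p)^p − ‖C‖_(p)^p)^(1/p)`, i.e. `tr((B−C)^p) + tr(C^p) ≤ tr(B^p)`;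
and for `p = 1` the inequality is an equality: `‖B − C‖_* = ‖B‖_* − ‖C‖_*`. -/
theorem schatten_difference_bound
    (n : ℕ) (B C : Matrix (Fin n) (Fin n) ℝ)
    (hB : B.PosSemidef) (hC : C.PosSemidef) (hBC : (B - C).PosSemidef) :
    (∀ p : ℝ, 1 ≤ p →
      schattenNorm p (B - C) ≤ (schattenPow p B - schattenPow p C) ^ (1 / p) ∧
      schattenPow p (B - C) + schattenPow p C ≤ schattenPow p B) ∧
    nuclearNorm (B - C) = nuclearNorm B - nuclearNorm C := by
  classical
  have hsum : (B - C) + C = B := by abel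
  set U : Matrix (Fin n) (Fin n) ℝ := (hB.1.eigenvectorUnitary : Matrix (Fin n) (Fin n) ℝ)
    with hU_def
  have hdiagB : star U * B * U = diagonal hB.1.eigenvalues := by
    have h := hB.1.conjStarAlgAut_star_eigenvectorUnitary
    rw [Unitary.conjStarAlgAut_star_apply] at h
    rwa [RCLike.ofReal_real_eq_id, Function.id_comp] at h
  constructor
  · intro p hp
    have hp0 : (0:ℝ) < p := lt_of_lt_of_le one_pos hp
    have hs : (0:ℝ) ≤ p - 1 := by linarith
    have hps : p - 1 + 1 = p := by ring
    have hBmA : (B - (B - C)).PosSemidef := by rw [sub_sub_cancel]; exact hC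
    have key1 := aux_key_step B (B - C) hB hBC hBmA hs
    have key2 := aux_key_step B C hB hC hBC hs
    have hsplit : star U * B * U = star U * (B - C) * U + star U * C * U := by
      conv_lhs => rw [← hsum]
      rw [Matrix.mul_add, Matrix.add_mul]
    have main : ∑ j, hBC.1.eigenvalues j ^ p + ∑ j, hC.1.eigenvalues j ^ p
        ≤ ∑ i, hB.1.eigenvalues i ^ p := by
      rw [← hps]
      calc ∑ j, hBC.1.eigenvalues j ^ (p-1+1) + ∑ j, hC.1.eigenvalues j ^ (p-1+1)
          ≤ (∑ i, hB.1.eigenvalues i ^ (p-1) * ((star U * (B - C) * U) i i))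
            + (∑ i, hB.1.eigenvalues i ^ (p-1) * ((star U * C * U) i i)) :=
            add_le_add key1 key2
        _ = ∑ i, hB.1.eigenvalues i ^ (p-1) * ((star U * B * U) i i) := by
            rw [← Finset.sum_add_distrib]
            refine Finset.sum_congr rfl fun i _ => ?_
            rw [hsplit, Matrix.add_apply]
            ring
        _ = ∑ i, hB.1.eigenvalues i ^ (p-1+1) := by
            rw [hdiagB]
            refine Finset.sum_congr rfl fun i _ => ?_
            rw [Matrix.diagonal_apply_eq]
            rcases (hB.eigenvalues_nonneg i).eq_or_lt with h0 | hpos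
            · rw [← h0, Real.zero_rpow (by linarith : p - 1 + 1 ≠ 0), mul_zero]
            · rw [Real.rpow_add hpos, Real.rpow_one]
    have e1 : schattenPow p (B - C) = ∑ j, hBC.1.eigenvalues j ^ p :=
      aux_schattenPow_psd p _ hBC
    have e2 : schattenPow p C = ∑ j, hC.1.eigenvalues j ^ p := aux_schattenPow_psd p C hC
    have e3 : schattenPow p B = ∑ j, hB.1.eigenvalues j ^ p := aux_schattenPow_psd p B hB
    have main2 : schattenPow p (B - C) + schattenPow p C ≤ schattenPow p B := by
      rw [e1, e2, e3]; exact main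
    refine ⟨?_, main2⟩
    have hnn : 0 ≤ schattenPow p (B - C) :=
      Finset.sum_nonneg fun i _ => by unfold svDesc; exact Real.rpow_nonneg (Real.sqrt_nonneg _) _
    have hnnC : 0 ≤ schattenPow p C :=
      Finset.sum_nonneg fun i _ => by unfold svDesc; exact Real.rpow_nonneg (Real.sqrt_nonneg _) _
    have h2 : schattenPow p (B - C) ≤ schattenPow p B - schattenPow p C := by linarith
    exact Real.rpow_le_rpow hnn h2 (by positivity)
  · rw [aux_nuclearNorm_psd _ hBC, aux_nuclearNorm_psd _ hC, aux_nuclearNorm_psd _ hB,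
      Matrix.trace_sub]
end

section
/- Let A be an n×n real SPSD matrix with eigenvalues λ₁ ≥ … ≥ λₙ ≥ 0, let Q ∈ ℝ^{n×ℓ} have orthonormal columns, let 1 ≤ k < n and ε ≥ 0. Suppose that there exists an n×n orthogonal projector P̄ (P̄ = P̄ᵀ = P̄²) with rank(P̄) ≤ k and column space contained in the column space of Q such that ‖A − P̄A‖_* ≤ (1+ε)‖A − A_(k)‖_*. Let Â := A^{1/2} P A^{1/2} be the Nyström approximation of A with respect to Q, where P is the orthogonal projection onto the column space of A^{1/2}Q. Then ‖A − Â_(k)‖_* ≤ (1+ε)‖A − A_(k)‖_*. -/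
open Matrix BigOperators

/-- The square root of a positive semidefinite matrix, as defined in the older Mathlib
(`Matrix.PosSemidef.sqrt`, removed since): `U * diagonal (√λ) * Uᴴ`. -/
noncomputable def Matrix.PosSemidef.sqrt {n : Type*} [Fintype n] [DecidableEq n]
    {A : Matrix n n ℝ} (hA : A.PosSemidef) : Matrix n n ℝ :=
  hA.1.eigenvectorUnitary.1 * diagonal (Real.sqrt ∘ hA.1.eigenvalues) *
    (star hA.1.eigenvectorUnitary : Matrix n n ℝ)

section NystromAux

theorem Matrix.isHermitian_transpose_mul_self {m l : ℕ} (M : Matrix (Fin m) (Fin l) ℝ) :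
    (Mᵀ * M).IsHermitian := by
  simpa using Matrix.isHermitian_conjTranspose_mul_self M

lemma nuclearNorm_eq_sum {m l : ℕ} (M : Matrix (Fin m) (Fin l) ℝ) :
    nuclearNorm M = ∑ i, Real.sqrt ((Matrix.isHermitian_transpose_mul_self M).eigenvalues i) := by
  unfold nuclearNorm svDesc eigsDesc
  exact Equiv.sum_comp
    ((Fin.revPerm).trans (Tuple.sort (Matrix.isHermitian_transpose_mul_self M).eigenvalues))
    (fun j => Real.sqrt ((Matrix.isHermitian_transpose_mul_self M).eigenvalues j))

section Spectral
variable {m l : ℕ}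

lemma star_unitary_eq_transpose {M : Matrix (Fin m) (Fin m) ℝ} (h : M.IsHermitian) :
    star (h.eigenvectorUnitary : Matrix (Fin m) (Fin m) ℝ)
      = (h.eigenvectorUnitary : Matrix (Fin m) (Fin m) ℝ)ᵀ := by
  rw [Matrix.star_eq_conjTranspose, Matrix.conjTranspose_eq_transpose_of_trivial]

lemma unitary_left {M : Matrix (Fin m) (Fin m) ℝ} (h : M.IsHermitian) :
    (h.eigenvectorUnitary : Matrix (Fin m) (Fin m) ℝ)ᵀ
      * (h.eigenvectorUnitary : Matrix (Fin m) (Fin m) ℝ) = 1 := by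
  rw [← star_unitary_eq_transpose h]
  exact Unitary.coe_star_mul_self h.eigenvectorUnitary

lemma unitary_right {M : Matrix (Fin m) (Fin m) ℝ} (h : M.IsHermitian) :
    (h.eigenvectorUnitary : Matrix (Fin m) (Fin m) ℝ)
      * (h.eigenvectorUnitary : Matrix (Fin m) (Fin m) ℝ)ᵀ = 1 :=
  mul_eq_one_comm.mp (unitary_left h)

lemma spectral_real {M : Matrix (Fin m) (Fin m) ℝ} (h : M.IsHermitian) :
    (h.eigenvectorUnitary : Matrix (Fin m) (Fin m) ℝ)ᵀ * M
      * (h.eigenvectorUnitary : Matrix (Fin m) (Fin m) ℝ)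
      = Matrix.diagonal h.eigenvalues := by
  have := h.conjStarAlgAut_star_eigenvectorUnitary
  rw [Unitary.conjStarAlgAut_apply] at this
  simp only [Unitary.coe_star, Matrix.star_eq_conjTranspose,
    Matrix.conjTranspose_eq_transpose_of_trivial, Matrix.transpose_transpose] at this
  rw [this]
  congr 1

end Spectral

section TraceNuclear
variable {m : ℕ}

lemma trace_via_unitary (M V : Matrix (Fin m) (Fin m) ℝ) (hV : V * Vᵀ = 1) :
    M.trace = ∑ i, ∑ j, V j i * (M * V) j i := by
  have h1 : (Vᵀ * (M * V)).trace = M.trace := by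
    rw [Matrix.trace_mul_comm, Matrix.mul_assoc, hV, Matrix.mul_one]
  rw [← h1]
  simp [Matrix.trace, Matrix.diag, Matrix.mul_apply]

lemma col_sq_sum (N : Matrix (Fin m) (Fin m) ℝ) (i : Fin m) :
    ∑ j, (N j i) ^ 2 = (Nᵀ * N) i i := by
  simp [Matrix.mul_apply, sq]

lemma trace_le_nuclearNorm (M : Matrix (Fin m) (Fin m) ℝ) : M.trace ≤ nuclearNorm M := by
  classical
  set h := Matrix.isHermitian_transpose_mul_self M with hh
  set V : Matrix (Fin m) (Fin m) ℝ := (h.eigenvectorUnitary : Matrix (Fin m) (Fin m) ℝ) with hVdef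
  have hVr : V * Vᵀ = 1 := unitary_right h
  have hVl : Vᵀ * V = 1 := unitary_left h
  have hdiag : (M * V)ᵀ * (M * V) = Matrix.diagonal h.eigenvalues := by
    rw [Matrix.transpose_mul, Matrix.mul_assoc, ← Matrix.mul_assoc Mᵀ M V,
      ← Matrix.mul_assoc Vᵀ (Mᵀ * M) V]
    exact spectral_real h
  rw [trace_via_unitary M V hVr, nuclearNorm_eq_sum]
  refine Finset.sum_le_sum fun i _ => ?_
  have hcs := Finset.sum_mul_sq_le_sq_mul_sq Finset.univ (fun j => V j i) (fun j => (M * V) j i)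
  have hV1 : ∑ j, (V j i) ^ 2 = 1 := by
    rw [col_sq_sum V i, hVl, Matrix.one_apply_eq]
  have hM1 : ∑ j, ((M * V) j i) ^ 2 = h.eigenvalues i := by
    rw [col_sq_sum (M * V) i, hdiag, Matrix.diagonal_apply_eq]
  calc ∑ j, V j i * (M * V) j i ≤ |∑ j, V j i * (M * V) j i| := le_abs_self _
    _ = Real.sqrt ((∑ j, V j i * (M * V) j i) ^ 2) := (Real.sqrt_sq_eq_abs _).symm
    _ ≤ Real.sqrt ((∑ j, (V j i) ^ 2) * ∑ j, ((M * V) j i) ^ 2) := Real.sqrt_le_sqrt hcs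
    _ = Real.sqrt (h.eigenvalues i) := by rw [hV1, hM1, one_mul]

end TraceNuclear

section PSDNuclear
variable {m : ℕ}

lemma psd_mulVec_eigenvector {M : Matrix (Fin m) (Fin m) ℝ} (hM : M.PosSemidef) (i : Fin m) :
    M *ᵥ ⇑((Matrix.isHermitian_transpose_mul_self M).eigenvectorBasis i)
      = Real.sqrt ((Matrix.isHermitian_transpose_mul_self M).eigenvalues i)
        • ⇑((Matrix.isHermitian_transpose_mul_self M).eigenvectorBasis i) := by
  classical
  set h := Matrix.isHermitian_transpose_mul_self M with hh
  set v : Fin m → ℝ := ⇑(h.eigenvectorBasis i) with hv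
  set d : ℝ := h.eigenvalues i with hd
  have hd0 : 0 ≤ d := (Matrix.posSemidef_conjTranspose_mul_self M).eigenvalues_nonneg i
  have hbase : (Mᴴ * M) *ᵥ v = d • v := h.mulVec_eigenvectorBasis i
  have hMM : M *ᵥ (M *ᵥ v) = d • v := by
    have h2 := hbase
    rw [hM.1, ← Matrix.mulVec_mulVec] at h2
    exact h2
  rcases eq_or_lt_of_le hd0 with hzero | hpos
  · -- d = 0 : M *ᵥ v = 0
    have hdot : (M *ᵥ v) ⬝ᵥ (M *ᵥ v) = 0 := by
      have h1 : v ⬝ᵥ ((Mᴴ * M) *ᵥ v) = (M *ᵥ v) ⬝ᵥ (M *ᵥ v) := by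
        rw [← Matrix.mulVec_mulVec, dotProduct_mulVec v Mᴴ,
          Matrix.conjTranspose_eq_transpose_of_trivial, Matrix.vecMul_transpose]
      rw [← h1, hbase, dotProduct_smul, ← hzero]
      simp
    have hMv : M *ᵥ v = 0 := by
      funext j
      have hnn : ∀ r ∈ Finset.univ, (0:ℝ) ≤ (M *ᵥ v) r * (M *ᵥ v) r :=
        fun r _ => mul_self_nonneg _
      have := (Finset.sum_eq_zero_iff_of_nonneg hnn).mp hdot j (Finset.mem_univ j)
      exact mul_self_eq_zero.mp this
    rw [hMv, ← hzero, Real.sqrt_zero, zero_smul]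
  · -- d > 0
    set N : Matrix (Fin m) (Fin m) ℝ := M + Matrix.diagonal (fun _ => Real.sqrt d) with hN
    have hNpd : N.PosDef :=
      Matrix.PosDef.posSemidef_add hM
        (Matrix.posDef_diagonal_iff.mpr fun _ => Real.sqrt_pos.mpr hpos)
    set w : Fin m → ℝ := M *ᵥ v - Real.sqrt d • v with hw
    have hNw : N *ᵥ w = 0 := by
      have hdiagmul : Matrix.diagonal (fun _ : Fin m => Real.sqrt d) *ᵥ w = Real.sqrt d • w := by
        funext j; simp [Matrix.mulVec_diagonal]
      rw [hN, Matrix.add_mulVec, hdiagmul, hw, Matrix.mulVec_sub, hMM, Matrix.mulVec_smul,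
        smul_sub, smul_smul, Real.mul_self_sqrt hd0]
      abel
    have hw0 : w = 0 := by
      by_contra hne
      have hpos2 := hNpd.dotProduct_mulVec_pos hne
      rw [hNw] at hpos2
      simp at hpos2
    exact sub_eq_zero.mp hw0

lemma psd_nuclearNorm_eq_trace {M : Matrix (Fin m) (Fin m) ℝ} (hM : M.PosSemidef) :
    nuclearNorm M = M.trace := by
  classical
  set h := Matrix.isHermitian_transpose_mul_self M with hh
  set V : Matrix (Fin m) (Fin m) ℝ := (h.eigenvectorUnitary : Matrix (Fin m) (Fin m) ℝ)
    with hVdef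
  have hVr : V * Vᵀ = 1 := unitary_right h
  have hVl : Vᵀ * V = 1 := unitary_left h
  have hcol : ∀ j i, (M * V) j i = Real.sqrt (h.eigenvalues i) * V j i := by
    intro j i
    have hv := psd_mulVec_eigenvector hM i
    have h1 : (M * V) j i = (M *ᵥ ⇑(h.eigenvectorBasis i)) j := by
      simp [Matrix.mul_apply, Matrix.mulVec, dotProduct, hVdef]
    rw [h1, hv]
    simp [hVdef]
  have hunit : ∀ i, ∑ j, V j i * V j i = 1 := by
    intro i
    have : (Vᵀ * V) i i = 1 := by rw [hVl, Matrix.one_apply_eq]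
    rw [← this]
    simp [Matrix.mul_apply]
  rw [trace_via_unitary M V hVr, nuclearNorm_eq_sum]
  refine Finset.sum_congr rfl fun i _ => ?_
  calc Real.sqrt (h.eigenvalues i)
      = Real.sqrt (h.eigenvalues i) * ∑ j, V j i * V j i := by rw [hunit i, mul_one]
    _ = ∑ j, V j i * (M * V) j i := by
        rw [Finset.mul_sum]
        refine Finset.sum_congr rfl fun j _ => ?_
        rw [hcol j i]; ring

end PSDNuclear

section Proj
variable {m : ℕ}

lemma psd_diag_nonneg {M : Matrix (Fin m) (Fin m) ℝ} (hM : M.PosSemidef) (i : Fin m) :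
    0 ≤ M i i := by
  exact hM.diag_nonneg

lemma proj_posSemidef {X : Matrix (Fin m) (Fin m) ℝ} (hs : Xᵀ = X) (hi : X * X = X) :
    X.PosSemidef := by
  have : X = Xᴴ * X := by
    rw [Matrix.conjTranspose_eq_transpose_of_trivial, hs, hi]
  rw [this]
  exact Matrix.posSemidef_conjTranspose_mul_self X

lemma conj_posSemidef {M : Matrix (Fin m) (Fin m) ℝ} (hM : M.PosSemidef)
    (B : Matrix (Fin m) (Fin m) ℝ) : (B * M * Bᵀ).PosSemidef := by
  have := hM.mul_mul_conjTranspose_same B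
  rwa [Matrix.conjTranspose_eq_transpose_of_trivial] at this

lemma proj_trace_eq_rank {X : Matrix (Fin m) (Fin m) ℝ} (hs : Xᵀ = X) (hi : X * X = X) :
    X.trace = (X.rank : ℝ) := by
  classical
  have hH : X.IsHermitian := by
    rw [Matrix.IsHermitian, Matrix.conjTranspose_eq_transpose_of_trivial, hs]
  set V : Matrix (Fin m) (Fin m) ℝ := (hH.eigenvectorUnitary : Matrix (Fin m) (Fin m) ℝ)
  have hVr : V * Vᵀ = 1 := unitary_right hH
  have hVl : Vᵀ * V = 1 := unitary_left hH
  have hspec : Vᵀ * X * V = Matrix.diagonal hH.eigenvalues := spectral_real hH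
  have hD : Matrix.diagonal hH.eigenvalues * Matrix.diagonal hH.eigenvalues
      = Matrix.diagonal hH.eigenvalues := by
    rw [← hspec]
    calc (Vᵀ * X * V) * (Vᵀ * X * V) = Vᵀ * (X * (V * Vᵀ) * X) * V := by
          simp only [Matrix.mul_assoc]
      _ = Vᵀ * X * V := by rw [hVr, Matrix.mul_one, hi, Matrix.mul_assoc]
  have h01 : ∀ i, hH.eigenvalues i = 0 ∨ hH.eigenvalues i = 1 := by
    intro i
    have := congrFun (congrFun hD i) i
    rw [Matrix.diagonal_mul_diagonal, Matrix.diagonal_apply_eq, Matrix.diagonal_apply_eq] at this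
    have h3 : hH.eigenvalues i * (hH.eigenvalues i - 1) = 0 := by nlinarith [this]
    rcases mul_eq_zero.mp h3 with h | h
    · exact Or.inl h
    · exact Or.inr (by linarith)
  have htr : X.trace = ∑ i, hH.eigenvalues i := by
    have h2 : (Matrix.diagonal hH.eigenvalues).trace = X.trace := by
      rw [← hspec, Matrix.trace_mul_cycle, hVr, Matrix.one_mul]
    rw [← h2, Matrix.trace_diagonal]
  have hrank : X.rank = Fintype.card {i // hH.eigenvalues i ≠ 0} :=
    hH.rank_eq_card_non_zero_eigs
  rw [htr, hrank]
  rw [Fintype.card_subtype]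
  rw [Finset.card_filter]
  push_cast
  refine Finset.sum_congr rfl fun i _ => ?_
  rcases h01 i with h | h <;> simp [h]

end Proj

section KyFan
variable {m : ℕ}

lemma card_filter_lt_fin (k : ℕ) (hkm : k ≤ m) :
    (Finset.univ.filter (fun i : Fin m => (i : ℕ) < k)).card = k := by
  classical
  have : Finset.univ.filter (fun i : Fin m => (i : ℕ) < k)
      = (Finset.univ : Finset (Fin k)).map (Fin.castLEEmb hkm) := by
    ext x
    simp only [Finset.mem_filter, Finset.mem_univ, true_and, Finset.mem_map]
    constructor
    · intro hx
      exact ⟨⟨(x : ℕ), hx⟩, by ext; simp⟩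
    · rintro ⟨y, rfl⟩
      simpa using y.isLt
  rw [this, Finset.card_map, Finset.card_univ, Fintype.card_fin]

lemma kyfan_sum_le (k : ℕ) (hk : 1 ≤ k) (hkm : k ≤ m) (ν t : Fin m → ℝ)
    (hν : Antitone ν) (hν0 : ∀ i, 0 ≤ ν i) (ht0 : ∀ i, 0 ≤ t i) (ht1 : ∀ i, t i ≤ 1)
    (htsum : ∑ i, t i ≤ (k : ℝ)) :
    ∑ i, ν i * t i ≤ ∑ i : Fin m, (if (i : ℕ) < k then ν i else 0) := by
  classical
  have hkm' : k - 1 < m := by omega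
  set c : ℝ := ν ⟨k - 1, hkm'⟩ with hc
  set s : Finset (Fin m) := Finset.univ.filter (fun i : Fin m => (i : ℕ) < k) with hs
  have hcard : (s.card : ℝ) = (k : ℝ) := by rw [hs, card_filter_lt_fin k hkm]
  have hc0 : 0 ≤ c := hν0 _
  have hcle : ∀ i ∈ s, c ≤ ν i := by
    intro i hi
    rw [hs, Finset.mem_filter] at hi
    exact hν (by simp [Fin.le_def]; omega)
  have hcge : ∀ i ∈ sᶜ, ν i ≤ c := by
    intro i hi
    rw [Finset.mem_compl, hs, Finset.mem_filter] at hi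
    push_neg at hi
    have : k ≤ (i : ℕ) := hi (Finset.mem_univ i)
    exact hν (by simp [Fin.le_def]; omega)
  have hsplit : ∑ i, ν i * t i = ∑ i ∈ s, ν i * t i + ∑ i ∈ sᶜ, ν i * t i :=
    (Finset.sum_add_sum_compl s _).symm
  have h1 : ∑ i ∈ sᶜ, ν i * t i ≤ c * ∑ i ∈ sᶜ, t i := by
    rw [Finset.mul_sum]
    exact Finset.sum_le_sum fun i hi => mul_le_mul_of_nonneg_right (hcge i hi) (ht0 i)
  have h2 : ∑ i ∈ sᶜ, t i ≤ ∑ i ∈ s, (1 - t i) := by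
    have := Finset.sum_add_sum_compl s t
    rw [Finset.sum_sub_distrib]
    simp only [Finset.sum_const, nsmul_eq_mul, mul_one]
    have := htsum
    rw [← Finset.sum_add_sum_compl s t] at this
    linarith [hcard]
  have h3 : c * ∑ i ∈ sᶜ, t i ≤ c * ∑ i ∈ s, (1 - t i) := mul_le_mul_of_nonneg_left h2 hc0
  have h4 : ∑ i ∈ s, ν i * t i + c * ∑ i ∈ s, (1 - t i) ≤ ∑ i ∈ s, ν i := by
    rw [Finset.mul_sum, ← Finset.sum_add_distrib]
    refine Finset.sum_le_sum fun i hi => ?_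
    have h5 : c * (1 - t i) ≤ ν i * (1 - t i) :=
      mul_le_mul_of_nonneg_right (hcle i hi) (by linarith [ht1 i])
    nlinarith [hcle i hi, ht0 i, ht1 i]
  have hrhs : ∑ i : Fin m, (if (i : ℕ) < k then ν i else 0) = ∑ i ∈ s, ν i := by
    rw [hs, Finset.sum_filter]
  rw [hrhs, hsplit]
  linarith

end KyFan

end NystromAux

/-- Good projections imply good Nyström approximations (nuclear norm):
if `Q` has orthonormal columns and some orthogonal projector `P̄` of rank `≤ k` with column
space inside that of `Q` satisfies `‖A − P̄A‖_* ≤ (1+ε)‖A − A_(k)‖_*`, then the Nyström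
approximation `Â = A^{1/2} P A^{1/2}` (with `P` the orthogonal projection onto the column
space of `A^{1/2}Q`) satisfies `‖A − Â_(k)‖_* ≤ (1+ε)‖A − A_(k)‖_*`. -/
theorem nuclear_projection_to_nystrom
    (n l k : ℕ) (hk : 1 ≤ k) (hkn : k < n) (ε : ℝ) (hε : 0 ≤ ε)
    (A U : Matrix (Fin n) (Fin n) ℝ) (μ : Fin n → ℝ)
    (hA : A.PosSemidef) (hdecA : IsSpectralDecomp A U μ)
    (Q : Matrix (Fin n) (Fin l) ℝ) (hQ : Qᵀ * Q = 1)
    (Pbar : Matrix (Fin n) (Fin n) ℝ)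
    (hPbarSymm : Pbarᵀ = Pbar) (hPbarIdem : Pbar * Pbar = Pbar)
    (hPbarRank : Pbar.rank ≤ k) (hPbarRange : ∃ Y : Matrix (Fin l) (Fin n) ℝ, Pbar = Q * Y)
    (hnear : nuclearNorm (A - Pbar * A) ≤ (1 + ε) * nuclearNorm (A - trunc k U μ))
    (P Ahat : Matrix (Fin n) (Fin n) ℝ)
    (hP : IsOrthProjOnto P (hA.sqrt * Q))
    (hAhat : Ahat = hA.sqrt * P * hA.sqrt) :
    ∀ (W : Matrix (Fin n) (Fin n) ℝ) (ν : Fin n → ℝ), IsSpectralDecomp Ahat W ν →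
      nuclearNorm (A - trunc k W ν) ≤ (1 + ε) * nuclearNorm (A - trunc k U μ) := by
  
  intro W ν hdec
  obtain ⟨hW, hν, hWd⟩ := hdec
  obtain ⟨hPt, hPidem, hPfix, -⟩ := hP
  classical
  obtain ⟨Y, hY⟩ := hPbarRange
  set S : Matrix (Fin n) (Fin n) ℝ := hA.sqrt with hSdef
  have hSpsd : S.PosSemidef := by
    have := (Matrix.PosSemidef.diagonal (d := Real.sqrt ∘ hA.1.eigenvalues)
      (fun i => Real.sqrt_nonneg _)).mul_mul_conjTranspose_same
      (hA.1.eigenvectorUnitary : Matrix (Fin n) (Fin n) ℝ)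
    rw [hSdef]; unfold Matrix.PosSemidef.sqrt; rwa [Matrix.star_eq_conjTranspose]
  have hSsym : Sᵀ = S := by
    rw [← Matrix.conjTranspose_eq_transpose_of_trivial]; exact hSpsd.1
  have hSS : S * S = A := by
    have hu : star (hA.1.eigenvectorUnitary : Matrix (Fin n) (Fin n) ℝ)
        * (hA.1.eigenvectorUnitary : Matrix (Fin n) (Fin n) ℝ) = 1 :=
      Unitary.coe_star_mul_self _
    rw [hSdef]; unfold Matrix.PosSemidef.sqrt
    conv_rhs => rw [hA.1.spectral_theorem, Unitary.conjStarAlgAut_apply]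
    calc _ = (hA.1.eigenvectorUnitary : Matrix (Fin n) (Fin n) ℝ)
          * (diagonal (Real.sqrt ∘ hA.1.eigenvalues)
            * (star (hA.1.eigenvectorUnitary : Matrix (Fin n) (Fin n) ℝ)
              * (hA.1.eigenvectorUnitary : Matrix (Fin n) (Fin n) ℝ))
            * diagonal (Real.sqrt ∘ hA.1.eigenvalues))
          * star (hA.1.eigenvectorUnitary : Matrix (Fin n) (Fin n) ℝ) := by
          simp only [Matrix.mul_assoc]
      _ = _ := by
          rw [hu, Matrix.mul_one, diagonal_mul_diagonal]
          congr 2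
          funext i j
          simp [diagonal_apply, Real.mul_self_sqrt (hA.eigenvalues_nonneg i)]
  have hWr : W * Wᵀ = 1 := mul_eq_one_comm.mp hW
  have hPpsd : P.PosSemidef := proj_posSemidef hPt hPidem
  have hAhatPsd : Ahat.PosSemidef := by
    rw [hAhat]
    have := conj_posSemidef hPpsd S
    rwa [hSsym] at this
  have hdiagν : Wᵀ * Ahat * W = Matrix.diagonal ν := by
    rw [hWd]
    calc Wᵀ * (W * Matrix.diagonal ν * Wᵀ) * W
        = (Wᵀ * W) * (Matrix.diagonal ν * (Wᵀ * W)) := by simp only [Matrix.mul_assoc]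
      _ = Matrix.diagonal ν := by rw [hW, Matrix.one_mul, Matrix.mul_one]
  have hν0 : ∀ i, 0 ≤ ν i := by
    intro i
    have hc : (Wᵀ * Ahat * W).PosSemidef := by
      have := conj_posSemidef hAhatPsd Wᵀ
      rwa [Matrix.transpose_transpose] at this
    have := psd_diag_nonneg hc i
    rwa [hdiagν, Matrix.diagonal_apply_eq] at this
  -- A - Ahat is PSD
  have hprojP : ((1 : Matrix (Fin n) (Fin n) ℝ) - P).PosSemidef := by
    refine proj_posSemidef ?_ ?_
    · rw [Matrix.transpose_sub, Matrix.transpose_one, hPt]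
    · rw [Matrix.sub_mul, Matrix.one_mul, Matrix.mul_sub, Matrix.mul_one, hPidem]
      abel
  have hAmAhat : (A - Ahat).PosSemidef := by
    have hrewrite : A - Ahat = S * (1 - P) * Sᵀ := by
      rw [hAhat, hSsym, Matrix.mul_sub, Matrix.mul_one, Matrix.sub_mul, hSS]
    rw [hrewrite]
    exact conj_posSemidef hprojP S
  -- decomposition of A - trunc
  set g : Fin n → ℝ := fun i => if (i : ℕ) < k then (0 : ℝ) else ν i with hg
  have hdiagsplit : Matrix.diagonal ν
      = Matrix.diagonal (fun i : Fin n => if (i : ℕ) < k then ν i else 0) + Matrix.diagonal g := by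
    rw [Matrix.diagonal_add]
    exact congrArg Matrix.diagonal
      (by funext i; by_cases hik : (i : ℕ) < k <;> simp [hg, hik])
  have hAt : A - trunc k W ν = (A - Ahat) + W * Matrix.diagonal g * Wᵀ := by
    have : Ahat = trunc k W ν + W * Matrix.diagonal g * Wᵀ := by
      rw [hWd, hdiagsplit]
      unfold trunc
      rw [Matrix.mul_add, Matrix.add_mul]
    rw [this]
    abel
  have hgPsd : (W * Matrix.diagonal g * Wᵀ).PosSemidef := by
    refine conj_posSemidef (Matrix.posSemidef_diagonal_iff.mpr fun i => ?_) W
    by_cases hik : (i : ℕ) < k <;> simp [hg, hik, hν0 i]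
  have hAtPsd : (A - trunc k W ν).PosSemidef := by
    rw [hAt]; exact hAmAhat.add hgPsd
  -- trace computations
  have htr_trunc : (trunc k W ν).trace = ∑ i : Fin n, (if (i : ℕ) < k then ν i else 0) := by
    unfold trunc
    rw [Matrix.trace_mul_cycle, hW, Matrix.one_mul, Matrix.trace_diagonal]
  have hLHS : nuclearNorm (A - trunc k W ν)
      = A.trace - ∑ i : Fin n, (if (i : ℕ) < k then ν i else 0) := by
    rw [psd_nuclearNorm_eq_trace hAtPsd, Matrix.trace_sub, htr_trunc]
  -- the weights t
  set t : Fin n → ℝ := fun i => (Wᵀ * Pbar * W) i i with ht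
  have hPbarPsd : Pbar.PosSemidef := proj_posSemidef hPbarSymm hPbarIdem
  have hconjPsd : (Wᵀ * Pbar * W).PosSemidef := by
    have := conj_posSemidef hPbarPsd Wᵀ
    rwa [Matrix.transpose_transpose] at this
  have ht0 : ∀ i, 0 ≤ t i := fun i => psd_diag_nonneg hconjPsd i
  have ht1 : ∀ i, t i ≤ 1 := by
    intro i
    have hpc : ((1 : Matrix (Fin n) (Fin n) ℝ) - Pbar).PosSemidef := by
      refine proj_posSemidef ?_ ?_
      · rw [Matrix.transpose_sub, Matrix.transpose_one, hPbarSymm]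
      · rw [Matrix.sub_mul, Matrix.one_mul, Matrix.mul_sub, Matrix.mul_one, hPbarIdem]
        abel
    have hone : ((1 : Matrix (Fin n) (Fin n) ℝ) - Wᵀ * Pbar * W).PosSemidef := by
      have h2 := conj_posSemidef hpc Wᵀ
      rw [Matrix.transpose_transpose] at h2
      have h3 : Wᵀ * (1 - Pbar) * W = 1 - Wᵀ * Pbar * W := by
        rw [Matrix.mul_sub, Matrix.mul_one, Matrix.sub_mul, hW]
      rwa [h3] at h2
    have h4 := psd_diag_nonneg hone i
    have h5 : ((1 : Matrix (Fin n) (Fin n) ℝ) - Wᵀ * Pbar * W) i i = 1 - t i := by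
      simp [Matrix.sub_apply, Matrix.one_apply_eq, ht]
    rw [h5] at h4
    linarith
  have htsum : ∑ i, t i ≤ (k : ℝ) := by
    have h1 : ∑ i, t i = (Wᵀ * Pbar * W).trace := by
      simp [Matrix.trace, Matrix.diag, ht]
    have h2 : (Wᵀ * Pbar * W).trace = Pbar.trace := by
      rw [Matrix.trace_mul_cycle, hWr, Matrix.one_mul]
    rw [h1, h2, proj_trace_eq_rank hPbarSymm hPbarIdem]
    exact_mod_cast hPbarRank
  -- key projection identity
  have hkey : P * (S * Pbar) = S * Pbar := by
    rw [hY, ← Matrix.mul_assoc S Q Y, ← Matrix.mul_assoc, hPfix]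
  have hPAP : Pbar * A * Pbar = Pbar * Ahat * Pbar := by
    calc Pbar * A * Pbar = (S * Pbar)ᵀ * (S * Pbar) := by
          rw [Matrix.transpose_mul, hSsym, hPbarSymm, ← hSS]
          simp only [Matrix.mul_assoc]
      _ = (P * (S * Pbar))ᵀ * (P * (S * Pbar)) := by rw [hkey]
      _ = Pbar * Ahat * Pbar := by
          rw [hAhat, Matrix.transpose_mul, Matrix.transpose_mul, hSsym, hPbarSymm, hPt]
          have h6 : P * (P * (S * Pbar)) = P * (S * Pbar) := by
            rw [← Matrix.mul_assoc, hPidem]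
          simp only [Matrix.mul_assoc]
          rw [h6]
  have htrPA : (Pbar * A).trace = ∑ i, ν i * t i := by
    have s1 : (Pbar * A * Pbar).trace = (Pbar * A).trace := by
      rw [Matrix.trace_mul_cycle, hPbarIdem]
    have s2 : (Pbar * Ahat * Pbar).trace = (Ahat * Pbar).trace := by
      rw [Matrix.trace_mul_cycle, hPbarIdem, Matrix.trace_mul_comm]
    have s3 : (Ahat * Pbar).trace = ∑ i, ν i * t i := by
      rw [hWd]
      have h7 : W * Matrix.diagonal ν * Wᵀ * Pbar = (W * Matrix.diagonal ν) * (Wᵀ * Pbar) := by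
        simp only [Matrix.mul_assoc]
      rw [h7, Matrix.trace_mul_comm]
      have h8 : Wᵀ * Pbar * (W * Matrix.diagonal ν)
          = (Wᵀ * Pbar * W) * Matrix.diagonal ν := by
        simp only [Matrix.mul_assoc]
      rw [h8, Matrix.trace_mul_comm]
      simp [Matrix.trace, Matrix.diag, Matrix.diagonal_mul, ht, mul_comm]
    rw [← s1, hPAP, s2, s3]
  have hkf : ∑ i, ν i * t i ≤ ∑ i : Fin n, (if (i : ℕ) < k then ν i else 0) :=
    kyfan_sum_le k hk (le_of_lt hkn) ν t hν hν0 ht0 ht1 htsum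
  have htrace_le : A.trace - (Pbar * A).trace ≤ (1 + ε) * nuclearNorm (A - trunc k U μ) := by
    have h9 : A.trace - (Pbar * A).trace = (A - Pbar * A).trace := (Matrix.trace_sub _ _).symm
    rw [h9]
    exact le_trans (trace_le_nuclearNorm _) hnear
  rw [hLHS]
  linarith [hkf, htrPA, htrace_le]
end
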